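/- For every real number p ≥ 1, every compact ultrametric space embeds isometrically into ℓ_p. -/

import Mathlib

open ENNReal

open Filter Topology


section UltraAux

variable {X : Type*} [MetricSpace X] [IsUltrametricDist X]

private lemma ultra_step (a b c : X) (h : dist a c < dist a b) : dist c b = dist a b := by
  apply le_antisymm
  · refine (IsUltrametricDist.dist_triangle_max c a b).trans (max_le ?_ le_rfl)
    rw [dist_comm]; exact h.le
  · by_contra hlt
    push_neg at hlt
    exact absurd (IsUltrametricDist.dist_triangle_max a c b)
      (not_le.mpr (max_lt h hlt))

private lemma ultra_dist_eq {x y x' y' : X} (h1 : dist x x' < dist x y)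
    (h2 : dist y y' < dist x y) : dist x' y' = dist x y := by
  have e1 : dist x' y = dist x y := ultra_step x y x' h1
  have h2' : dist y y' < dist y x' := by rwa [dist_comm y x', e1]
  have e2 : dist y' x' = dist y x' := ultra_step y x' y' h2'
  rw [dist_comm x' y', e2, dist_comm y x', e1]

private lemma finite_large_dists [CompactSpace X] {ε : ℝ} (hε : 0 < ε) :
    {s : ℝ | ε ≤ s ∧ ∃ x y : X, dist x y = s}.Finite := by
  by_contra hinf
  rw [← Set.not_infinite, not_not] at hinf
  set e := hinf.natEmbedding with he
  choose q1 q2 hq using fun n => ((e n).2).2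
  obtain ⟨⟨a, b⟩, φ, hφ, hconv⟩ := CompactSpace.tendsto_subseq (fun n => (q1 n, q2 n))
  have h1 : Tendsto (fun n => q1 (φ n)) atTop (𝓝 a) :=
    (continuous_fst.tendsto _).comp hconv
  have h2 : Tendsto (fun n => q2 (φ n)) atTop (𝓝 b) :=
    (continuous_snd.tendsto _).comp hconv
  have hdist : Tendsto (fun n => dist (q1 (φ n)) (q2 (φ n))) atTop (𝓝 (dist a b)) :=
    h1.dist h2
  have hab : ε ≤ dist a b := by
    refine ge_of_tendsto hdist (Eventually.of_forall fun n => ?_)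
    rw [hq (φ n)]
    exact ((e (φ n)).2).1
  have habpos : 0 < dist a b := lt_of_lt_of_le hε hab
  obtain ⟨N1, hN1⟩ := Metric.tendsto_atTop.mp h1 (dist a b) habpos
  obtain ⟨N2, hN2⟩ := Metric.tendsto_atTop.mp h2 (dist a b) habpos
  set N := max N1 N2
  have key : ∀ n ≥ N, dist (q1 (φ n)) (q2 (φ n)) = dist a b := by
    intro n hn
    exact ultra_dist_eq (by rw [dist_comm]; exact hN1 n (le_trans (le_max_left _ _) hn))
      (by rw [dist_comm]; exact hN2 n (le_trans (le_max_right _ _) hn))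
  have : e (φ N) = e (φ (N + 1)) := by
    apply Subtype.coe_injective
    show ((e (φ N) : ℝ)) = ((e (φ (N+1)) : ℝ))
    rw [← hq (φ N), ← hq (φ (N+1)), key N le_rfl, key (N+1) (le_of_lt (Nat.lt_succ_self N))]
  have := e.injective this
  exact absurd (hφ.injective this) (by omega)

end UltraAux


section ScaleAux
variable {X : Type*} [MetricSpace X] [IsUltrametricDist X] [CompactSpace X]


/-- The set of positive distance values. -/
private def distSet (X : Type*) [MetricSpace X] : Set ℝ :=
  {s : ℝ | 0 < s ∧ ∃ x y : X, dist x y = s}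

private lemma distSet_inter_finite {ε : ℝ} (hε : 0 < ε) :
    (distSet X ∩ Set.Ici ε).Finite := by
  apply (finite_large_dists (X := X) hε).subset
  rintro s ⟨⟨_, hs⟩, hε'⟩
  exact ⟨hε', hs⟩

private lemma exists_greatest_of_subset {A : Set ℝ} (h : (distSet X ∩ A).Nonempty) :
    ∃ g ∈ distSet X ∩ A, ∀ s ∈ distSet X ∩ A, s ≤ g := by
  obtain ⟨s₀, hs₀⟩ := h
  have hs₀pos : 0 < s₀ := hs₀.1.1
  have hfin : (distSet X ∩ A ∩ Set.Ici s₀).Finite :=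
    ((distSet_inter_finite hs₀pos).subset (by rintro s ⟨⟨h1, _⟩, h2⟩; exact ⟨h1, h2⟩))
  have hne : (distSet X ∩ A ∩ Set.Ici s₀).Nonempty := ⟨s₀, hs₀, Set.mem_Ici.mpr le_rfl⟩
  obtain ⟨g, hg, hgmax⟩ := Set.Finite.exists_maximalFor id _ hfin hne
  refine ⟨g, hg.1, fun s hs => ?_⟩
  by_cases hss : s₀ ≤ s
  · by_contra hlt
    push_neg at hlt
    exact absurd (hgmax (j := s) ⟨hs, hss⟩ hlt.le) (not_le.mpr hlt)
  · push_neg at hss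
    exact hss.le.trans hg.2

private lemma exists_scales (hX : ∃ x y : X, x ≠ y) :
    ∃ t : ℕ → ℝ, StrictAnti t ∧ (∀ k, 0 < t k) ∧ Tendsto t atTop (𝓝 0) ∧
      (∀ x y : X, x ≠ y → ∃ m, t m = dist x y) := by
  classical
  obtain ⟨x₀, y₀, hxy₀⟩ := hX
  have hSne : (distSet X).Nonempty := ⟨dist x₀ y₀, dist_pos.2 hxy₀, x₀, y₀, rfl⟩
  have hSeq : distSet X ∩ Set.univ = distSet X := Set.inter_univ _
  obtain ⟨g₀, hg₀mem, hg₀max⟩ := exists_greatest_of_subset (A := Set.univ)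
    (by rw [hSeq]; exact hSne)
  rw [hSeq] at hg₀mem
  rw [hSeq] at hg₀max
  -- the recursive "next scale" function
  have hnext : ∀ r : ℝ, 0 < r → ∃ r' : ℝ, 0 < r' ∧ r' < r ∧
      (∀ s ∈ distSet X, s < r → s ≤ r') ∧
      ((distSet X ∩ Set.Iio r).Nonempty → r' ∈ distSet X) ∧
      (¬(distSet X ∩ Set.Iio r).Nonempty → r' = r / 2) := by
    intro r hr
    by_cases h : (distSet X ∩ Set.Iio r).Nonempty
    · obtain ⟨g, hg, hgmax⟩ := exists_greatest_of_subset h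
      exact ⟨g, hg.1.1, hg.2, fun s hs hsr => hgmax s ⟨hs, hsr⟩, fun _ => hg.1,
        fun h' => absurd h h'⟩
    · refine ⟨r / 2, by linarith, by linarith, fun s hs hsr => ?_, fun h' => absurd h' h,
        fun _ => rfl⟩
      exact absurd ⟨hs, hsr⟩ (fun hc => h ⟨s, hc⟩)
  choose! next hnext_pos hnext_lt hnext_max hnext_mem hnext_half using hnext
  set t : ℕ → ℝ := fun k => Nat.rec g₀ (fun _ r => next r) k with ht
  have htsucc : ∀ k, t (k + 1) = next (t k) := fun k => rfl
  have htpos : ∀ k, 0 < t k := by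
    intro k
    induction k with
    | zero => exact hg₀mem.1
    | succ k ih => rw [htsucc]; exact hnext_pos _ ih
  have htlt : ∀ k, t (k + 1) < t k := fun k => by
    rw [htsucc]; exact hnext_lt _ (htpos k)
  have htanti : StrictAnti t := strictAnti_nat_of_succ_lt htlt
  -- ∀ ε > 0 the sequence goes below ε
  have hsmall : ∀ ε : ℝ, 0 < ε → ∃ k, t k < ε := by
    intro ε hε
    by_contra hcon
    push_neg at hcon
    by_cases hcase : ∃ k, ¬(distSet X ∩ Set.Iio (t k)).Nonempty
    · obtain ⟨k, hk⟩ := hcase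
      have hhalf : ∀ j, t (k + j) = t k / 2 ^ j := by
        intro j
        induction j with
        | zero => simp
        | succ j ih =>
          have hempty : ¬(distSet X ∩ Set.Iio (t (k + j))).Nonempty := by
            rintro ⟨s, hs1, hs2⟩
            refine hk ⟨s, hs1, ?_⟩
            exact lt_of_lt_of_le hs2 (htanti.antitone (Nat.le_add_right k j))
          have hv : t (k + j + 1) = t (k + j) / 2 := by
            rw [htsucc]
            exact hnext_half _ (htpos _) hempty
          rw [show k + (j + 1) = k + j + 1 from rfl, hv, ih]
          rw [pow_succ]
          ring
      obtain ⟨j, hj⟩ := pow_unbounded_of_one_lt (t k / ε) (one_lt_two (α := ℝ))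
      have h2j : (0:ℝ) < 2 ^ j := by positivity
      have : t k / 2 ^ j < ε := by
        rw [div_lt_iff₀ h2j]
        have := (div_lt_iff₀ hε).mp hj
        nlinarith
      exact absurd (hcon (k + j)) (not_le.mpr (by rw [hhalf j]; exact this))
    · push_neg at hcase
      have hmemS : ∀ k, t (k + 1) ∈ distSet X := by
        intro k
        rw [htsucc]
        exact hnext_mem _ (htpos k) (hcase k)
      have hinj : Function.Injective (fun k : ℕ => t (k + 1)) := by
        intro a b hab
        exact Nat.succ_injective (htanti.injective hab)
      exact (Set.infinite_of_injective_forall_mem hinj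
        (fun k => Set.mem_inter (hmemS k) (hcon (k + 1)))) (distSet_inter_finite hε)
  -- every element of distSet is a value of t
  have htmem : ∀ s ∈ distSet X, ∃ m, t m = s := by
    intro s hs
    have hex : ∃ k, t k < s := hsmall s hs.1
    have hm0 : Nat.find hex ≠ 0 := by
      intro h0
      have h1 : t 0 < s := by
        have := Nat.find_spec hex
        rwa [h0] at this
      exact absurd (hg₀max s hs) (not_le.mpr h1)
    set m' := Nat.find hex - 1 with hm'
    have hfind : Nat.find hex = m' + 1 := by omega
    have h1 : t (m' + 1) < s := by rw [← hfind]; exact Nat.find_spec hex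
    have h2 : ¬ t m' < s := Nat.find_min hex (by omega)
    push_neg at h2
    refine ⟨m', le_antisymm ?_ h2⟩
    by_contra hlt
    push_neg at hlt
    have : s ≤ t (m' + 1) := by
      rw [htsucc]
      exact hnext_max _ (htpos m') s hs hlt
    linarith
  refine ⟨t, htanti, htpos, ?_, fun x y hxy => htmem _ ⟨dist_pos.2 hxy, x, y, rfl⟩⟩
  refine Metric.tendsto_atTop.mpr fun ε hε => ?_
  obtain ⟨k, hk⟩ := hsmall ε hε
  refine ⟨k, fun n hn => ?_⟩
  rw [dist_zero_right, Real.norm_eq_abs, abs_of_pos (htpos n)]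
  exact lt_of_le_of_lt (htanti.antitone hn) hk

end ScaleAux


private lemma hasSum_telescope' {a : ℕ → ℝ} (hmono : ∀ k, a (k + 1) ≤ a k)
    (hlim : Tendsto a atTop (𝓝 0)) :
    HasSum (fun k => a k - a (k + 1)) (a 0) := by
  rw [hasSum_iff_tendsto_nat_of_nonneg (fun i => sub_nonneg.mpr (hmono i))]
  have hsum : ∀ n, ∑ i ∈ Finset.range n, (a i - a (i + 1)) = a 0 - a n :=
    fun n => Finset.sum_range_sub' a n
  simp only [hsum]
  have := (tendsto_const_nhds (x := a 0) (f := atTop (α := ℕ))).sub hlim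
  simpa using this



set_option maxHeartbeats 1000000 in
/-- Every compact ultrametric space embeds isometrically into `ℓ_p` for `p ≥ 1`. -/
theorem compact_ultrametric_embeds_into_lp (p : ℝ) (hp : 1 ≤ p)
    (X : Type*) [MetricSpace X] [IsUltrametricDist X] [CompactSpace X] :
    haveI : Fact ((1 : ℝ≥0∞) ≤ ENNReal.ofReal p) := ⟨ENNReal.one_le_ofReal.mpr hp⟩
    ∃ f : X → lp (fun _ : ℕ => ℝ) (ENNReal.ofReal p), Isometry f := by
  classical
  haveI hFact : Fact ((1 : ℝ≥0∞) ≤ ENNReal.ofReal p) := ⟨ENNReal.one_le_ofReal.mpr hp⟩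
  have hp0 : 0 < p := lt_of_lt_of_le one_pos hp
  have hPtoReal : (ENNReal.ofReal p).toReal = p := ENNReal.toReal_ofReal hp0.le
  by_cases hsub : Subsingleton X
  · refine ⟨fun _ => 0, Isometry.of_dist_eq fun x y => ?_⟩
    have hxy : x = y := Subsingleton.elim x y
    subst hxy
    simp
  · rw [not_subsingleton_iff_nontrivial] at hsub
    obtain ⟨t, htanti, htpos, httend, htmem⟩ := exists_scales (X := X)
      (by obtain ⟨a, b, h⟩ := exists_pair_ne X; exact ⟨a, b, h⟩)
    set u : ℕ → X := TopologicalSpace.denseSeq X with hu_def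
    have hu : DenseRange u := TopologicalSpace.denseRange_denseSeq X
    -- weights
    set lam : ℕ → ℝ := fun k => (t k ^ p - t (k + 1) ^ p) / 2 with hlam_def
    have hlam_pos : ∀ k, 0 < lam k := by
      intro k
      have h1 : t (k + 1) ^ p < t k ^ p :=
        Real.rpow_lt_rpow (htpos (k + 1)).le (htanti (Nat.lt_succ_self k)) hp0
      have h2 : 0 < t k ^ p - t (k + 1) ^ p := sub_pos.mpr h1
      simp only [hlam_def]
      linarith
    set w : ℕ → ℝ := fun k => lam k ^ (1 / p) with hw_def
    have hw_pos : ∀ k, 0 < w k := fun k => Real.rpow_pos_of_pos (hlam_pos k) _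
    have hw_pow : ∀ k, w k ^ p = lam k := by
      intro k
      simp only [hw_def]
      rw [← Real.rpow_mul (hlam_pos k).le, one_div_mul_cancel hp0.ne', Real.rpow_one]
    -- tendsto of t ^ p along tails
    have htp_tend : ∀ m : ℕ, Tendsto (fun k : ℕ => t (k + m) ^ p) atTop (𝓝 0) := by
      intro m
      have h1 : Tendsto (fun k : ℕ => t (k + m)) atTop (𝓝 0) :=
        httend.comp (Filter.tendsto_add_atTop_nat m)
      have h2 : ContinuousAt (fun s : ℝ => s ^ p) 0 :=
        Real.continuousAt_rpow_const 0 p (Or.inr hp0.le)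
      have h3 := h2.tendsto.comp h1
      rwa [Real.zero_rpow hp0.ne'] at h3
    -- telescoping tails
    have htail : ∀ m : ℕ, HasSum (fun k => lam (m + k)) (t m ^ p / 2) := by
      intro m
      have hmono : ∀ k : ℕ, t (m + (k + 1)) ^ p ≤ t (m + k) ^ p :=
        fun k => Real.rpow_le_rpow (htpos _).le (htanti.antitone (by omega)) hp0.le
      have htend' : Tendsto (fun k : ℕ => t (m + k) ^ p) atTop (𝓝 0) := by
        have h1 := htp_tend m
        refine h1.congr fun k => ?_
        rw [Nat.add_comm]
      have H := hasSum_telescope' (a := fun k => t (m + k) ^ p) hmono htend'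
      have H2 := H.div_const 2
      refine H2.congr_fun fun k => ?_
      simp only [hlam_def]
      rw [Nat.add_assoc]
    have hlam_sum : Summable lam := by
      have h := htail 0
      simp only [Nat.zero_add] at h
      exact h.summable
    -- the "leader" function
    have huniq : ∀ (x : X) (k : ℕ), ∃! n : ℕ,
        dist x (u n) ≤ t (k + 1) ∧ ∀ m < n, t (k + 1) < dist (u n) (u m) := by
      intro x k
      have hex : ∃ n, dist x (u n) ≤ t (k + 1) := by
        obtain ⟨n, hn⟩ := Metric.denseRange_iff.mp hu x (t (k + 1)) (htpos (k + 1))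
        exact ⟨n, hn.le⟩
      have hNspec : dist x (u (Nat.find hex)) ≤ t (k + 1) := Nat.find_spec hex
      refine ⟨Nat.find hex, ⟨hNspec, fun m hm => ?_⟩, fun n hn => ?_⟩
      · by_contra hle
        push_neg at hle
        have hxm : dist x (u m) ≤ t (k + 1) :=
          (IsUltrametricDist.dist_triangle_max x (u (Nat.find hex)) (u m)).trans
            (max_le hNspec hle)
        exact absurd hxm (Nat.find_min hex hm)
      · by_contra hne
        rcases lt_or_gt_of_ne hne with hlt | hgt
        · exact absurd hn.1 (Nat.find_min hex hlt)
        · have hnN : dist (u n) (u (Nat.find hex)) ≤ t (k + 1) := by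
            refine (IsUltrametricDist.dist_triangle_max (u n) x (u (Nat.find hex))).trans ?_
            rw [dist_comm (u n) x]
            exact max_le hn.1 hNspec
          exact absurd hnN (not_le.mpr (hn.2 (Nat.find hex) hgt))
    choose nu hnu using huniq
    have hnu_cond : ∀ (x : X) (k : ℕ), dist x (u (nu x k)) ≤ t (k + 1) :=
      fun x k => (hnu x k).1.1
    have hnu_uniq : ∀ (x : X) (k n : ℕ),
        (dist x (u n) ≤ t (k + 1) ∧ ∀ m < n, t (k + 1) < dist (u n) (u m)) → n = nu x k :=
      fun x k n h => (hnu x k).2 n h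
    have hnu_eq : ∀ (x y : X) (k : ℕ), dist x y ≤ t (k + 1) → nu x k = nu y k := by
      intro x y k h
      refine hnu_uniq y k (nu x k) ⟨?_, (hnu x k).1.2⟩
      refine (IsUltrametricDist.dist_triangle_max y x (u (nu x k))).trans
        (max_le ?_ (hnu_cond x k))
      rw [dist_comm]; exact h
    have hnu_ne : ∀ (x y : X) (k : ℕ), t (k + 1) < dist x y → nu x k ≠ nu y k := by
      intro x y k h heq
      have hle : dist x y ≤ t (k + 1) := by
        refine (IsUltrametricDist.dist_triangle_max x (u (nu x k)) y).trans
          (max_le (hnu_cond x k) ?_)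
        rw [dist_comm, heq]
        exact hnu_cond y k
      exact absurd hle (not_le.mpr h)
    -- the embedding
    set g : X → ℕ → ℕ → ℝ := fun x k n => if n = nu x k then w k else 0 with hg_def
    set e : ℕ ≃ ℕ × ℕ := (Denumerable.eqv (ℕ × ℕ)).symm with he_def
    set F : X → ℕ → ℝ := fun x i => g x (e i).1 (e i).2 with hF_def
    have hg_norm : ∀ (x : X) (k n : ℕ), ‖g x k n‖ ^ p = if n = nu x k then lam k else 0 := by
      intro x k n
      simp only [hg_def]
      split
      · rw [Real.norm_eq_abs, abs_of_pos (hw_pos k), hw_pow]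
      · rw [norm_zero, Real.zero_rpow hp0.ne']
    have hmemF : ∀ x : X, Memℓp (F x) (ENNReal.ofReal p) := by
      intro x
      apply memℓp_gen
      rw [hPtoReal]
      have hSprod : Summable (fun kn : ℕ × ℕ => ‖g x kn.1 kn.2‖ ^ p) := by
        rw [summable_prod_of_nonneg (fun kn => Real.rpow_nonneg (norm_nonneg _) p)]
        constructor
        · intro k
          apply summable_of_ne_finset_zero (s := {nu x k})
          intro n hn
          rw [hg_norm, if_neg (by simpa using hn)]
        · have heqf : (fun k => ∑' n, ‖g x k n‖ ^ p) = lam := by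
            funext k
            rw [tsum_congr (fun n => hg_norm x k n),
              tsum_eq_single (nu x k) (fun n hn => if_neg hn), if_pos rfl]
          exact heqf ▸ hlam_sum
      exact (Equiv.summable_iff e).mpr hSprod
    set f : X → lp (fun _ : ℕ => ℝ) (ENNReal.ofReal p) := fun x => ⟨F x, hmemF x⟩ with hf_def
    refine ⟨f, Isometry.of_dist_eq fun x y => ?_⟩
    by_cases hxy : x = y
    · subst hxy; simp
    · have hr : 0 < dist x y := dist_pos.mpr hxy
      obtain ⟨m, hm⟩ := htmem x y hxy
      set d : ℕ × ℕ → ℝ := fun kn => ‖g x kn.1 kn.2 - g y kn.1 kn.2‖ ^ p with hd_def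
      have hd_eq : ∀ kn : ℕ × ℕ, d kn =
          if t (kn.1 + 1) < dist x y ∧ (kn.2 = nu x kn.1 ∨ kn.2 = nu y kn.1)
          then lam kn.1 else 0 := by
        rintro ⟨k, n⟩
        simp only [hd_def, hg_def]
        by_cases hk : t (k + 1) < dist x y
        · have hne := hnu_ne x y k hk
          by_cases h1 : n = nu x k
          · rw [if_pos h1, if_neg (h1 ▸ hne), sub_zero, Real.norm_eq_abs,
              abs_of_pos (hw_pos k), hw_pow, if_pos ⟨hk, Or.inl h1⟩]
          · by_cases h2 : n = nu y k
            · rw [if_neg h1, if_pos h2, zero_sub, norm_neg, Real.norm_eq_abs,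
                abs_of_pos (hw_pos k), hw_pow, if_pos ⟨hk, Or.inr h2⟩]
            · rw [if_neg h1, if_neg h2, sub_zero, norm_zero, Real.zero_rpow hp0.ne',
                if_neg (by rintro ⟨-, h | h⟩; exacts [h1 h, h2 h])]
        · push_neg at hk
          have hnu' : nu x k = nu y k := hnu_eq x y k hk
          rw [hnu', sub_self, norm_zero, Real.zero_rpow hp0.ne',
            if_neg (fun h => absurd h.1 (not_lt.mpr hk))]
      have hd_inner_summable : ∀ k, Summable (fun n => d (k, n)) := by
        intro k
        apply summable_of_ne_finset_zero (s := {nu x k, nu y k})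
        intro n hn
        simp only [Finset.mem_insert, Finset.mem_singleton] at hn
        push_neg at hn
        rw [hd_eq]
        exact if_neg (by rintro ⟨-, h | h⟩; exacts [hn.1 h, hn.2 h])
      have hd_inner : ∀ k : ℕ, ∑' n, d (k, n) =
          if t (k + 1) < dist x y then 2 * lam k else 0 := by
        intro k
        by_cases hk : t (k + 1) < dist x y
        · have hne := hnu_ne x y k hk
          rw [tsum_eq_sum (s := {nu x k, nu y k}) ?_]
          · rw [Finset.sum_pair hne]
            rw [hd_eq (k, nu x k), hd_eq (k, nu y k)]
            rw [if_pos ⟨hk, Or.inl rfl⟩, if_pos ⟨hk, Or.inr rfl⟩, if_pos hk]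
            ring
          · intro n hn
            simp only [Finset.mem_insert, Finset.mem_singleton] at hn
            push_neg at hn
            rw [hd_eq]
            exact if_neg (by rintro ⟨-, h | h⟩; exacts [hn.1 h, hn.2 h])
        · rw [tsum_eq_sum (s := (∅ : Finset ℕ))
            (fun n _ => by rw [hd_eq]; exact if_neg (fun h => hk h.1)),
            Finset.sum_empty, if_neg hk]
      have hd_nonneg : ∀ kn : ℕ × ℕ, 0 ≤ d kn :=
        fun kn => Real.rpow_nonneg (norm_nonneg _) p
      have houter_summable : Summable (fun k => if t (k + 1) < dist x y then 2 * lam k else 0) := by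
        refine Summable.of_nonneg_of_le (fun k => ?_) (fun k => ?_) (hlam_sum.mul_left 2)
        · split
          · exact le_of_lt (mul_pos two_pos (hlam_pos k))
          · exact le_rfl
        · split
          · exact le_rfl
          · exact le_of_lt (mul_pos two_pos (hlam_pos k))
      have hd_sum : Summable d := by
        rw [summable_prod_of_nonneg hd_nonneg]
        refine ⟨hd_inner_summable, ?_⟩
        have heqf : (fun k => ∑' n, d (k, n)) =
            fun k => if t (k + 1) < dist x y then 2 * lam k else 0 := funext hd_inner
        rw [heqf]
        exact houter_summable
      have hiff : ∀ k, (t (k + 1) < dist x y ↔ m ≤ k) := by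
        intro k
        rw [← hm, htanti.lt_iff_gt]
        omega
      have htotal : ∑' kn : ℕ × ℕ, d kn = dist x y ^ p := by
        rw [hd_sum.tsum_prod' hd_inner_summable, tsum_congr hd_inner]
        rw [← houter_summable.sum_add_tsum_nat_add m]
        have h1 : ∑ i ∈ Finset.range m, (if t (i + 1) < dist x y then 2 * lam i else 0) = 0 := by
          refine Finset.sum_eq_zero (fun i hi => if_neg ?_)
          rw [hiff]
          have := Finset.mem_range.mp hi
          omega
        have h2 : HasSum (fun i => if t (i + m + 1) < dist x y then 2 * lam (i + m) else 0)
            (dist x y ^ p) := by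
          have H := (htail m).mul_left 2
          have hval : 2 * (t m ^ p / 2) = dist x y ^ p := by rw [hm]; ring
          rw [hval] at H
          refine H.congr_fun fun i => ?_
          rw [if_pos ((hiff (i + m)).mpr (Nat.le_add_left m i)), Nat.add_comm i m]
        rw [h1, zero_add, h2.tsum_eq]
      have hcoe : ∀ i : ℕ, ((f x - f y : lp (fun _ : ℕ => ℝ) (ENNReal.ofReal p)) : ∀ _ : ℕ, ℝ) i
          = F x i - F y i := fun i => by
        rw [lp.coeFn_sub]; rfl
      rw [dist_eq_norm, lp.norm_eq_tsum_rpow (by rw [hPtoReal]; exact hp0) (f x - f y), hPtoReal]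
      have h5 : (fun i : ℕ => ‖((f x - f y : lp (fun _ : ℕ => ℝ) (ENNReal.ofReal p)) :
          ∀ _ : ℕ, ℝ) i‖ ^ p) = fun i => d (e i) := by
        funext i
        rw [hcoe i]
      rw [h5, Equiv.tsum_eq e d, htotal, ← Real.rpow_mul hr.le,
        mul_one_div_cancel hp0.ne', Real.rpow_one]
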